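/- arXiv:2402.05933 — 2 statements merged into one kernel-verified Lean document; each statement's English description precedes it below -/
import Mathlib

section
/- Let Q ∈ ℝ^{N×N} be the matrix of the linear map x ↦ φ[Ux] (truncated DFT of real vectors). Then Q is invertible and Q Qᵀ = Λ², where Λ is the diagonal matrix with Λ_{κκ} = 1 if κ = 0 or (N even and κ = N/2), and Λ_{κκ} = 1/√2 otherwise. -/
open Complex Matrix

noncomputable def dftMatrix (N : ℕ) : Matrix (Fin N) (Fin N) ℂ :=
  fun κ τ => (1 / Real.sqrt N : ℝ) *
    Complex.exp (-(2 * Real.pi * Complex.I * (κ : ℕ) * (τ : ℕ)) / N)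

/-- The coordinate chart extracting the free real/imaginary parts. -/
noncomputable def phi (N : ℕ) (z : Fin N → ℂ) (j : Fin N) : ℝ :=
  if (j : ℕ) ≤ N / 2 then (z j).re
  else (z ⟨(j : ℕ) - N / 2, lt_of_le_of_lt (Nat.sub_le _ _) j.isLt⟩).im

/-- The diagonal scaling matrix `Λ`, with `Λ_{κκ} = 1` if `κ = 0` or (`N` even and
`κ = N/2`), and `1/√2` otherwise. -/
noncomputable def Lambda (N : ℕ) : Matrix (Fin N) (Fin N) ℝ :=
  Matrix.diagonal fun κ => if (κ : ℕ) = 0 ∨ 2 * (κ : ℕ) = N then 1 else 1 / Real.sqrt 2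

lemma sum_exp_fin (N : ℕ) (hN : 0 < N) (m : ℤ) :
    ∑ τ : Fin N, Complex.exp (2 * Real.pi * Complex.I * m * (τ : ℕ) / N) =
      if (N : ℤ) ∣ m then (N : ℂ) else 0 := by
  have hNC : (N : ℂ) ≠ 0 := Nat.cast_ne_zero.mpr hN.ne'
  set ζ : ℂ := Complex.exp (2 * Real.pi * Complex.I * m / N) with hζ
  have hterm : ∀ τ : Fin N, Complex.exp (2 * Real.pi * Complex.I * m * (τ : ℕ) / N) = ζ ^ (τ : ℕ) := by
    intro τ
    rw [hζ, ← Complex.exp_nat_mul]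
    ring_nf
  rw [Finset.sum_congr rfl (fun τ _ => hterm τ)]
  have hζN : ζ ^ N = 1 := by
    rw [hζ, ← Complex.exp_nat_mul]
    have : (N : ℂ) * (2 * Real.pi * Complex.I * m / N) = m * (2 * Real.pi * Complex.I) := by
      field_simp
    rw [this]
    exact Complex.exp_int_mul_two_pi_mul_I m
  have hζ1 : ζ = 1 ↔ (N : ℤ) ∣ m := by
    rw [hζ, Complex.exp_eq_one_iff]
    constructor
    · rintro ⟨n, hn⟩
      refine ⟨n, ?_⟩
      have hπ : (2 * Real.pi * Complex.I : ℂ) ≠ 0 := by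
        simp [Real.pi_ne_zero, Complex.I_ne_zero]
      have : (m : ℂ) = n * N := by
        field_simp at hn
        have h2 : (m : ℂ) * (2 * Real.pi * Complex.I) = ((n : ℂ) * N) * (2 * Real.pi * Complex.I) := by
          rw [mul_comm ((m:ℂ)) _ , hn]; ring
        exact mul_right_cancel₀ hπ h2
      have : m = n * (N:ℤ) := by exact_mod_cast this
      rw [this]; ring
    · rintro ⟨n, hn⟩
      refine ⟨n, ?_⟩
      rw [hn]
      push_cast
      field_simp
  by_cases h : (N : ℤ) ∣ m
  · simp only [h, if_true]
    have : ζ = 1 := hζ1.mpr h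
    simp [this]
  · simp only [h, if_false]
    have hne : ζ ≠ 1 := fun hc => h (hζ1.mp hc)
    rw [Fin.sum_univ_eq_sum_range (fun i => ζ ^ i), geom_sum_eq hne]
    simp [hζN]

lemma sum_UU (N : ℕ) (hN : 0 < N) (j k : Fin N) :
    ∑ τ : Fin N, dftMatrix N j τ * dftMatrix N k τ =
      if (N : ℤ) ∣ ((j : ℕ) + (k : ℕ) : ℤ) then 1 else 0 := by
  have hNR : (0 : ℝ) < N := Nat.cast_pos.mpr hN
  have hNC : (N : ℂ) ≠ 0 := Nat.cast_ne_zero.mpr hN.ne'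
  have key : ∀ τ : Fin N, dftMatrix N j τ * dftMatrix N k τ =
      (1 / (N : ℂ)) * Complex.exp (2 * Real.pi * Complex.I * ((-((j:ℕ) + (k:ℕ)) : ℤ)) * (τ : ℕ) / N) := by
    intro τ
    unfold dftMatrix
    rw [mul_mul_mul_comm, ← Complex.exp_add]
    congr 1
    · rw [← Complex.ofReal_mul, div_mul_div_comm, one_mul, Real.mul_self_sqrt hNR.le]
      push_cast; ring
    · rw [← add_div]
      congr 1
      push_cast; ring
  rw [Finset.sum_congr rfl (fun τ _ => key τ), ← Finset.mul_sum,
    sum_exp_fin N hN (-((j:ℕ) + (k:ℕ)) : ℤ)]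
  have : ((N : ℤ) ∣ (-((j:ℕ) + (k:ℕ)) : ℤ)) ↔ ((N : ℤ) ∣ ((j : ℕ) + (k : ℕ) : ℤ)) := by
    exact Int.dvd_neg
  rw [if_congr this rfl rfl]
  split <;> field_simp <;> simp

lemma sum_UconjU (N : ℕ) (hN : 0 < N) (j k : Fin N) :
    ∑ τ : Fin N, dftMatrix N j τ * (starRingEnd ℂ) (dftMatrix N k τ) =
      if (N : ℤ) ∣ ((j : ℕ) - (k : ℕ) : ℤ) then 1 else 0 := by
  have hNR : (0 : ℝ) < N := Nat.cast_pos.mpr hN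
  have hNC : (N : ℂ) ≠ 0 := Nat.cast_ne_zero.mpr hN.ne'
  have key : ∀ τ : Fin N, dftMatrix N j τ * (starRingEnd ℂ) (dftMatrix N k τ) =
      (1 / (N : ℂ)) * Complex.exp (2 * Real.pi * Complex.I * (((k:ℕ) - (j:ℕ)) : ℤ) * (τ : ℕ) / N) := by
    intro τ
    unfold dftMatrix
    rw [RingHom.map_mul, ← Complex.exp_conj]
    rw [mul_mul_mul_comm, ← Complex.exp_add]
    congr 1
    · rw [Complex.conj_ofReal, ← Complex.ofReal_mul, div_mul_div_comm, one_mul,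
        Real.mul_self_sqrt hNR.le]
      push_cast; ring
    · simp only [map_div₀, map_neg, _root_.map_mul, Complex.conj_I, Complex.conj_ofReal,
        Complex.conj_natCast, map_ofNat]
      rw [← add_div]
      congr 1
      push_cast; ring
  rw [Finset.sum_congr rfl (fun τ _ => key τ), ← Finset.mul_sum,
    sum_exp_fin N hN (((k:ℕ) - (j:ℕ)) : ℤ)]
  have : ((N : ℤ) ∣ (((k:ℕ) - (j:ℕ)) : ℤ)) ↔ ((N : ℤ) ∣ ((j : ℕ) - (k : ℕ) : ℤ)) := by
    constructor <;> intro h <;> [exact (dvd_sub_comm).mp h; exact (dvd_sub_comm).mp h]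
  rw [if_congr this rfl rfl]
  split <;> field_simp <;> simp

-- pointwise product identities
lemma reRe (a b : ℂ) : a.re * b.re = ((a * (starRingEnd ℂ) b).re + (a * b).re) / 2 := by
  rw [Complex.mul_re, Complex.mul_re, Complex.conj_re, Complex.conj_im]; ring

lemma imIm (a b : ℂ) : a.im * b.im = ((a * (starRingEnd ℂ) b).re - (a * b).re) / 2 := by
  rw [Complex.mul_re, Complex.mul_re, Complex.conj_re, Complex.conj_im]; ring

lemma reIm (a b : ℂ) : a.re * b.im = ((a * b).im - (a * (starRingEnd ℂ) b).im) / 2 := by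
  rw [Complex.mul_im, Complex.mul_im, Complex.conj_re, Complex.conj_im]; ring

lemma imRe (a b : ℂ) : a.im * b.re = ((a * b).im + (a * (starRingEnd ℂ) b).im) / 2 := by
  rw [Complex.mul_im, Complex.mul_im, Complex.conj_re, Complex.conj_im]; ring

lemma nat_dvd_iff (N s : ℕ) (hs : s ≤ N) : N ∣ s ↔ s = 0 ∨ s = N := by
  constructor
  · intro h
    rcases lt_or_eq_of_le hs with h' | h'
    · exact Or.inl (Nat.eq_zero_of_dvd_of_lt h h')
    · exact Or.inr h'
  · rintro (h | h) <;> simp [h]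

lemma fin_sub_dvd (N : ℕ) (j k : Fin N) : (N : ℤ) ∣ ((j : ℕ) - (k : ℕ) : ℤ) ↔ j = k := by
  constructor
  · intro h
    have h1 : N ∣ ((j : ℕ) - (k : ℕ) : ℤ).natAbs := by
      have := Int.natAbs_dvd_natAbs.mpr h
      simpa using this
    have h2 : ((j : ℕ) - (k : ℕ) : ℤ).natAbs < N := by
      have hj := j.isLt; have hk := k.isLt
      omega
    have := Nat.eq_zero_of_dvd_of_lt h1 h2
    have : ((j : ℕ) - (k : ℕ) : ℤ) = 0 := by omega
    have : (j : ℕ) = (k : ℕ) := by omega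
    exact Fin.ext this
  · rintro rfl; simp

/-- the matrix `Q` of the truncated DFT `x ↦ φ[Ux]` of real vectors is
invertible and satisfies `Q Qᵀ = Λ²`. -/
theorem Q_invertible_and_QQt (N : ℕ) (hN : 0 < N) (Q : Matrix (Fin N) (Fin N) ℝ)
    (hQ : ∀ x : Fin N → ℝ, Q *ᵥ x = phi N (dftMatrix N *ᵥ fun τ => (x τ : ℂ))) :
    IsUnit Q ∧ Q * Qᵀ = Lambda N * Lambda N := by
  -- entries of Q
  have hentry : ∀ (j τ : Fin N), Q j τ =
      if (j : ℕ) ≤ N / 2 then (dftMatrix N j τ).re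
      else (dftMatrix N ⟨(j : ℕ) - N / 2, lt_of_le_of_lt (Nat.sub_le _ _) j.isLt⟩ τ).im := by
    intro j τ
    have h := congrFun (hQ (Pi.single τ 1)) j
    have hl : (Q *ᵥ Pi.single τ 1) j = Q j τ := by
      rw [Matrix.mulVec_single]
      simp
    rw [hl] at h
    rw [h]
    unfold phi
    simp only [Matrix.mulVec, dotProduct, Pi.single_apply, apply_ite (fun r : ℝ => (r : ℂ)),
      Complex.ofReal_one, Complex.ofReal_zero, mul_ite, mul_one, mul_zero,
      Finset.sum_ite_eq', Finset.mem_univ, if_true]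
  -- the main identity
  have hmain : Q * Qᵀ = Lambda N * Lambda N := by
    ext j k
    rw [Matrix.mul_apply]
    simp only [Matrix.transpose_apply]
    have hrhs : (Lambda N * Lambda N) j k = if j = k then
        (if (j : ℕ) = 0 ∨ 2 * (j : ℕ) = N then (1:ℝ) else 1 / Real.sqrt 2) *
        (if (j : ℕ) = 0 ∨ 2 * (j : ℕ) = N then (1:ℝ) else 1 / Real.sqrt 2) else 0 := by
      rw [Lambda, Matrix.diagonal_mul_diagonal, Matrix.diagonal_apply]
    rw [hrhs]
    have h2 : (1 / Real.sqrt 2 : ℝ) * (1 / Real.sqrt 2) = 1 / 2 := by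
      rw [div_mul_div_comm, one_mul, Real.mul_self_sqrt (by norm_num)]
    by_cases hj : (j : ℕ) ≤ N / 2 <;> by_cases hk : (k : ℕ) ≤ N / 2
    · -- both real parts
      have hsum : ∑ τ : Fin N, Q j τ * Q k τ =
          (((∑ τ : Fin N, dftMatrix N j τ * (starRingEnd ℂ) (dftMatrix N k τ)).re) +
           ((∑ τ : Fin N, dftMatrix N j τ * dftMatrix N k τ).re)) / 2 := by
        rw [Complex.re_sum, Complex.re_sum, ← Finset.sum_add_distrib, Finset.sum_div]
        refine Finset.sum_congr rfl fun τ _ => ?_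
        rw [hentry j τ, hentry k τ, if_pos hj, if_pos hk, reRe]
      rw [hsum, sum_UconjU N hN j k, sum_UU N hN j k]
      simp only [apply_ite Complex.re, Complex.one_re, Complex.zero_re, fin_sub_dvd]
      have hsumdvd : ((N : ℤ) ∣ ((j : ℕ) + (k : ℕ) : ℤ)) ↔ ((j:ℕ) + (k:ℕ) = 0 ∨ (j:ℕ) + (k:ℕ) = N) := by
        rw [show ((j:ℕ) + (k:ℕ) : ℤ) = (((j:ℕ) + (k:ℕ) : ℕ) : ℤ) by push_cast; ring,
          Int.natCast_dvd_natCast, nat_dvd_iff]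
        omega
      simp only [hsumdvd]
      by_cases hjk : j = k
      · subst hjk
        simp only [if_pos rfl]
        by_cases hc : (j : ℕ) = 0 ∨ 2 * (j : ℕ) = N
        · rw [if_pos hc, if_pos (by omega : (j:ℕ) + (j:ℕ) = 0 ∨ (j:ℕ) + (j:ℕ) = N)]
          norm_num
        · rw [if_neg hc, if_neg (by omega : ¬((j:ℕ) + (j:ℕ) = 0 ∨ (j:ℕ) + (j:ℕ) = N)), h2]
          norm_num
      · rw [if_neg hjk, if_neg hjk]
        have hne : ¬((j:ℕ) + (k:ℕ) = 0 ∨ (j:ℕ) + (k:ℕ) = N) := by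
          have hjv : (j:ℕ) ≠ (k:ℕ) := fun hc => hjk (Fin.ext hc)
          omega
        rw [if_neg hne]
        simp
    · -- j real, k imaginary : cross terms vanish
      set k' : Fin N := ⟨(k : ℕ) - N / 2, lt_of_le_of_lt (Nat.sub_le _ _) k.isLt⟩ with hk'
      have hsum : ∑ τ : Fin N, Q j τ * Q k τ =
          (((∑ τ : Fin N, dftMatrix N j τ * dftMatrix N k' τ).im) -
           ((∑ τ : Fin N, dftMatrix N j τ * (starRingEnd ℂ) (dftMatrix N k' τ)).im)) / 2 := by
        rw [Complex.im_sum, Complex.im_sum, ← Finset.sum_sub_distrib, Finset.sum_div]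
        refine Finset.sum_congr rfl fun τ _ => ?_
        rw [hentry j τ, hentry k τ, if_pos hj, if_neg hk, reIm]
      rw [hsum, sum_UconjU N hN j k', sum_UU N hN j k']
      have hjk : j ≠ k := by
        intro hc; rw [hc] at hj; exact hk hj
      rw [if_neg hjk]
      simp only [apply_ite Complex.im, Complex.one_im, Complex.zero_im]
      split <;> split <;> norm_num
    · -- j imaginary, k real
      set j' : Fin N := ⟨(j : ℕ) - N / 2, lt_of_le_of_lt (Nat.sub_le _ _) j.isLt⟩ with hj'
      have hsum : ∑ τ : Fin N, Q j τ * Q k τ =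
          (((∑ τ : Fin N, dftMatrix N j' τ * dftMatrix N k τ).im) +
           ((∑ τ : Fin N, dftMatrix N j' τ * (starRingEnd ℂ) (dftMatrix N k τ)).im)) / 2 := by
        rw [Complex.im_sum, Complex.im_sum, ← Finset.sum_add_distrib, Finset.sum_div]
        refine Finset.sum_congr rfl fun τ _ => ?_
        rw [hentry j τ, hentry k τ, if_neg hj, if_pos hk, imRe]
      rw [hsum, sum_UconjU N hN j' k, sum_UU N hN j' k]
      have hjk : j ≠ k := by
        intro hc; rw [hc] at hj; exact hj hk
      rw [if_neg hjk]
      simp only [apply_ite Complex.im, Complex.one_im, Complex.zero_im]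
      split <;> split <;> norm_num
    · -- both imaginary
      set j' : Fin N := ⟨(j : ℕ) - N / 2, lt_of_le_of_lt (Nat.sub_le _ _) j.isLt⟩ with hj'
      set k' : Fin N := ⟨(k : ℕ) - N / 2, lt_of_le_of_lt (Nat.sub_le _ _) k.isLt⟩ with hk'
      have hsum : ∑ τ : Fin N, Q j τ * Q k τ =
          (((∑ τ : Fin N, dftMatrix N j' τ * (starRingEnd ℂ) (dftMatrix N k' τ)).re) -
           ((∑ τ : Fin N, dftMatrix N j' τ * dftMatrix N k' τ).re)) / 2 := by
        rw [Complex.re_sum, Complex.re_sum, ← Finset.sum_sub_distrib, Finset.sum_div]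
        refine Finset.sum_congr rfl fun τ _ => ?_
        rw [hentry j τ, hentry k τ, if_neg hj, if_neg hk, imIm]
      rw [hsum, sum_UconjU N hN j' k', sum_UU N hN j' k']
      have hj'v : (j' : ℕ) = (j : ℕ) - N / 2 := rfl
      have hk'v : (k' : ℕ) = (k : ℕ) - N / 2 := rfl
      have hnsum : ¬ ((N : ℤ) ∣ ((j' : ℕ) + (k' : ℕ) : ℤ)) := by
        rw [show ((j':ℕ) + (k':ℕ) : ℤ) = (((j':ℕ) + (k':ℕ) : ℕ) : ℤ) by push_cast; ring,
          Int.natCast_dvd_natCast, nat_dvd_iff _ _ (by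
            have hjv := j.isLt; have hkv := k.isLt; omega)]
        have hjv := j.isLt; have hkv := k.isLt
        omega
      have hiff : j' = k' ↔ j = k := by
        simp only [hj', hk', Fin.mk.injEq, Fin.ext_iff]
        omega
      have hdvd : (if (N : ℤ) ∣ ((j' : ℕ) - (k' : ℕ) : ℤ) then (1:ℂ) else 0) =
          if j = k then 1 else 0 :=
        if_congr ((fin_sub_dvd N j' k').trans hiff) rfl rfl
      rw [hdvd, if_neg hnsum]
      simp only [apply_ite Complex.re, Complex.one_re, Complex.zero_re]
      by_cases hjk : j = k
      · rw [if_pos hjk, if_pos hjk]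
        have hcond : ¬ ((j : ℕ) = 0 ∨ 2 * (j : ℕ) = N) := by omega
        rw [if_neg hcond, h2]
        norm_num
      · rw [if_neg hjk, if_neg hjk]
        simp
  refine ⟨?_, hmain⟩
  rw [Matrix.isUnit_iff_isUnit_det, isUnit_iff_ne_zero]
  intro hdet
  have hd := congrArg Matrix.det hmain
  rw [Matrix.det_mul, Matrix.det_transpose, hdet, mul_zero] at hd
  have hne : (Lambda N).det ≠ 0 := by
    rw [Lambda, Matrix.det_diagonal]
    apply Finset.prod_ne_zero_iff.mpr
    intro κ _
    split
    · norm_num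
    · positivity
  rw [Matrix.det_mul] at hd
  exact hne (by
    rcases mul_eq_zero.mp hd.symm with h | h
    · exact h
    · exact h)
end

section
/- Score matching equivalence: let s̃: ℂ^N → ℂ^N satisfy the mirror symmetry s̃(z)_κ = conj(s̃(z)_{N−κ}), and define s'(x) = U* s̃(Ux) for x ∈ ℝ^N. Then s'(x) ∈ ℝ^N (it is real-valued), and for any target g ∈ ℝ^N and its transformed target g̃ = φ^{-1}[Q g] one has ‖s'(x) − Qᵀ h‖² = ‖s̃(Ux) − Λ² φ^{-1}[h]‖² for all h ∈ ℝ^N, where Λ² φ^{-1}[h] = φ^{-1}[Λ² h]. In particular the frequency-domain squared loss against Λ²-scaled scores equals the time-domain squared loss. -/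
open Complex Matrix Finset

noncomputable def phiInv (N : ℕ) (y : Fin N → ℝ) (κ : Fin N) : ℂ :=
  if h : (κ : ℕ) ≤ N / 2 then
    if h0 : (κ : ℕ) = 0 ∨ 2 * (κ : ℕ) = N then (y κ : ℂ)
    else ⟨y κ, y ⟨(κ : ℕ) + N / 2, by
      have hlt := κ.isLt; simp only [not_or] at h0; omega⟩⟩
  else
    ⟨y ⟨N - (κ : ℕ), by have hlt := κ.isLt; omega⟩,
     -(y ⟨N - (κ : ℕ) + N / 2, by
        have hlt := κ.isLt; simp only [not_le] at h; omega⟩)⟩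

def sig (N : ℕ) (κ : Fin N) : Fin N := ⟨(N - (κ : ℕ)) % N, Nat.mod_lt _ κ.pos⟩

lemma sig_val (N : ℕ) (κ : Fin N) (h : 0 < (κ:ℕ)) : (sig N κ : ℕ) = N - κ := by
  have := κ.isLt
  simp only [sig]
  exact Nat.mod_eq_of_lt (by omega)

lemma sig_val0 (N : ℕ) (κ : Fin N) (h : (κ:ℕ) = 0) : (sig N κ : ℕ) = 0 := by
  simp only [sig, h, Nat.sub_zero, Nat.mod_self]

lemma sig_sig (N : ℕ) (κ : Fin N) : sig N (sig N κ) = κ := by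
  have := κ.isLt
  ext
  rcases Nat.eq_zero_or_pos (κ : ℕ) with h | h
  · rw [sig_val0 _ _ (sig_val0 _ _ h), h]
  · rw [sig_val, sig_val _ _ h] <;> [omega; (rw [sig_val _ _ h]; omega)]

lemma dft_symm (N : ℕ) (κ τ : Fin N) : dftMatrix N κ τ = dftMatrix N τ κ := by
  simp only [dftMatrix]; ring_nf

lemma conj_dft (N : ℕ) (κ τ : Fin N) :
    starRingEnd ℂ (dftMatrix N κ τ) = dftMatrix N (sig N κ) τ := by
  have hlt := κ.isLt
  have hN : (0:ℕ) < N := κ.pos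
  have hNC : (N:ℂ) ≠ 0 := Nat.cast_ne_zero.2 hN.ne'
  simp only [dftMatrix, _root_.map_mul, ← Complex.exp_conj, Complex.conj_ofReal]
  congr 1
  have h1 : ((starRingEnd ℂ) (-(2 * ↑Real.pi * I * (κ:ℕ) * (τ:ℕ)) / N)) =
      (2 * ↑Real.pi * I * (κ:ℕ) * (τ:ℕ)) / N := by
    simp only [map_div₀, map_neg, _root_.map_mul, map_ofNat, Complex.conj_ofReal,
      Complex.conj_I, map_natCast]
    ring
  rw [h1]
  rcases Nat.eq_zero_or_pos (κ : ℕ) with h | h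
  · rw [sig_val0 _ _ h, h]; norm_num
  · have hv : ((sig N κ : ℕ) : ℂ) = (N : ℂ) - (κ : ℕ) := by
      rw [sig_val _ _ h]; push_cast [Nat.cast_sub hlt.le]; ring
    rw [hv, show (-(2 * ↑Real.pi * I * ((N:ℂ) - (κ:ℕ)) * (τ:ℕ)) / N) =
      2 * ↑Real.pi * I * (κ:ℕ) * (τ:ℕ) / N + (-(τ:ℕ):ℤ) * (2 * ↑Real.pi * I) from by
        push_cast; field_simp; ring,
      Complex.exp_add, Complex.exp_int_mul_two_pi_mul_I, mul_one]

lemma dft_mul_conjT (N : ℕ) (hN : 0 < N) :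
    dftMatrix N * (dftMatrix N)ᴴ = 1 := by
  have hNR : (0:ℝ) < (N:ℝ) := by exact_mod_cast hN
  have hNC : (N:ℂ) ≠ 0 := Nat.cast_ne_zero.2 hN.ne'
  ext κ j
  simp only [Matrix.mul_apply, Matrix.conjTranspose_apply, Matrix.one_apply, dftMatrix,
    star_mul', RCLike.star_def, Complex.conj_ofReal]
  have hconj : ∀ τ : Fin N, (starRingEnd ℂ) (Complex.exp (-(2 * ↑Real.pi * I * (j:ℕ) * (τ:ℕ)) / N)) =
      Complex.exp ((2 * ↑Real.pi * I * (j:ℕ) * (τ:ℕ)) / N) := by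
    intro τ
    rw [← Complex.exp_conj]
    congr 1
    simp only [map_div₀, map_neg, _root_.map_mul, map_ofNat, Complex.conj_ofReal,
      Complex.conj_I, map_natCast]
    ring
  have hrr : ((1 / Real.sqrt N : ℝ) : ℂ) * ((1 / Real.sqrt N : ℝ) : ℂ) = (1 / N : ℂ) := by
    rw [← Complex.ofReal_mul, div_mul_div_comm, one_mul, Real.mul_self_sqrt hNR.le]
    push_cast
    ring
  set d : ℤ := (j : ℕ) - (κ : ℕ) with hd
  set ζ : ℂ := Complex.exp (2 * ↑Real.pi * I * d / N) with hζ
  have hterm : ∀ τ : Fin N,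
      ((1 / Real.sqrt N : ℝ) : ℂ) * Complex.exp (-(2 * ↑Real.pi * I * (κ:ℕ) * (τ:ℕ)) / N) *
        (((1 / Real.sqrt N : ℝ) : ℂ) * (starRingEnd ℂ) (Complex.exp (-(2 * ↑Real.pi * I * (j:ℕ) * (τ:ℕ)) / N))) =
      (1 / N : ℂ) * ζ ^ (τ : ℕ) := by
    intro τ
    rw [hconj τ, mul_mul_mul_comm, hrr, hζ, ← Complex.exp_nat_mul, ← Complex.exp_add]
    congr 2
    push_cast [hd]
    field_simp
    ring
  rw [Finset.sum_congr rfl (fun τ _ => hterm τ), ← Finset.mul_sum,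
    Fin.sum_univ_eq_sum_range (fun i => ζ ^ i) N]
  by_cases hkj : κ = j
  · have hd0 : d = 0 := by rw [hd, hkj]; ring
    simp only [hd0, hζ, Int.cast_zero, mul_zero, zero_div, Complex.exp_zero, one_pow,
      Finset.sum_const, Finset.card_range, nsmul_eq_mul, mul_one, hkj, if_pos rfl]
    field_simp
    simp
  · have hd0 : d ≠ 0 := by
      rw [hd]
      have := Fin.val_ne_of_ne hkj
      omega
    have h2 : (2 * (Real.pi:ℂ) * I) ≠ 0 := by
      simp [Complex.ofReal_ne_zero, Real.pi_ne_zero, Complex.I_ne_zero]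
    have hζ1 : ζ ≠ 1 := by
      rw [hζ, Ne, Complex.exp_eq_one_iff]
      rintro ⟨n, hn⟩
      rw [div_eq_iff hNC] at hn
      have hc : (d : ℂ) = (n : ℂ) * N := mul_left_cancel₀ h2 (by linear_combination hn)
      have hz : d = n * N := by exact_mod_cast hc
      have h1 := κ.isLt; have h2 := j.isLt
      have : d < N ∧ -(N:ℤ) < d := by constructor <;> omega
      rcases this with ⟨ha, hb⟩
      have hNZ : (0:ℤ) ≤ (N:ℤ) := by positivity
      rcases lt_trichotomy n 0 with h | h | h
      · have hn1 : n ≤ -1 := by omega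
        nlinarith [mul_le_mul_of_nonneg_right hn1 hNZ]
      · rw [h, zero_mul] at hz; exact hd0 hz
      · have hn1 : 1 ≤ n := by omega
        nlinarith [mul_le_mul_of_nonneg_right hn1 hNZ]
    have hζN : ζ ^ N = 1 := by
      rw [hζ, ← Complex.exp_nat_mul,
        show (N:ℂ) * (2 * ↑Real.pi * I * d / N) = (d:ℤ) * (2 * ↑Real.pi * I) from by
          field_simp]
      exact Complex.exp_int_mul_two_pi_mul_I d
    rw [geom_sum_eq hζ1, hζN]
    simp [hkj]


lemma sig_invol (N : ℕ) : Function.Involutive (sig N) := fun κ => sig_sig N κ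

lemma norm_pres {N : ℕ} (M : Matrix (Fin N) (Fin N) ℂ) (h : Mᴴ * M = 1) (v : Fin N → ℂ) :
    ∑ κ, ‖(M *ᵥ v) κ‖ ^ 2 = ∑ κ, ‖v κ‖ ^ 2 := by
  have key : star (M *ᵥ v) ⬝ᵥ (M *ᵥ v) = star v ⬝ᵥ v := by
    rw [Matrix.star_mulVec, ← Matrix.dotProduct_mulVec, Matrix.mulVec_mulVec, h,
      Matrix.one_mulVec]
  have hw : ∀ w : Fin N → ℂ, star w ⬝ᵥ w = ((∑ κ, ‖w κ‖ ^ 2 : ℝ) : ℂ) := by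
    intro w
    rw [Complex.ofReal_sum]
    apply Finset.sum_congr rfl
    intro κ _
    rw [Pi.star_apply, Complex.sq_norm, mul_comm, RCLike.star_def]
    exact Complex.mul_conj _
  rw [hw, hw] at key
  exact_mod_cast key

lemma reality {N : ℕ} (hN : 0 < N) (w : Fin N → ℂ)
    (hw : ∀ κ, w κ = starRingEnd ℂ (w (sig N κ)))
    (τ : Fin N) : (((dftMatrix N)ᴴ *ᵥ w) τ).im = 0 := by
  rw [← Complex.conj_eq_iff_im]
  simp only [Matrix.mulVec, dotProduct, Matrix.conjTranspose_apply, RCLike.star_def,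
    map_sum, _root_.map_mul, Complex.conj_conj]
  rw [← Equiv.sum_comp (Function.Involutive.toPerm _ (sig_invol N))
    (fun κ => dftMatrix N κ τ * (starRingEnd ℂ) (w κ))]
  apply Finset.sum_congr rfl
  intro κ _
  simp only [Function.Involutive.coe_toPerm]
  rw [conj_dft, ← hw κ]

-- orthogonality in sum form
lemma orth (N : ℕ) (hN : 0 < N) (a b : Fin N) :
    ∑ τ : Fin N, dftMatrix N a τ * starRingEnd ℂ (dftMatrix N b τ) =
      if a = b then 1 else 0 := by
  have := congrFun (congrFun (dft_mul_conjT N hN) a) b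
  simpa [Matrix.mul_apply, Matrix.conjTranspose_apply, Matrix.one_apply, RCLike.star_def]
    using this

-- sum with plain product
lemma orth' (N : ℕ) (hN : 0 < N) (a b : Fin N) :
    ∑ τ : Fin N, dftMatrix N a τ * dftMatrix N b τ = if a = sig N b then 1 else 0 := by
  rw [← orth N hN a (sig N b)]
  apply Finset.sum_congr rfl
  intro τ _
  rw [conj_dft, sig_sig]

-- real part / imaginary part of U entries as combinations
lemma c1 (N : ℕ) (hN : 0 < N) (κ j : Fin N) :
    ∑ τ : Fin N, dftMatrix N κ τ * (((dftMatrix N j τ).re : ℝ) : ℂ) =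
      (1/2) * ((if κ = j then 1 else 0) + (if κ = sig N j then 1 else 0)) := by
  have hre : ∀ z : ℂ, ((z.re : ℝ) : ℂ) = (z + starRingEnd ℂ z) / 2 := by
    intro z; rw [Complex.add_conj]; push_cast; ring
  calc ∑ τ : Fin N, dftMatrix N κ τ * (((dftMatrix N j τ).re : ℝ) : ℂ)
      = ∑ τ : Fin N, ((dftMatrix N κ τ * dftMatrix N j τ) / 2
          + (dftMatrix N κ τ * starRingEnd ℂ (dftMatrix N j τ)) / 2) := by
        apply Finset.sum_congr rfl; intro τ _; rw [hre]; ring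
    _ = (∑ τ : Fin N, dftMatrix N κ τ * dftMatrix N j τ) / 2
          + (∑ τ : Fin N, dftMatrix N κ τ * starRingEnd ℂ (dftMatrix N j τ)) / 2 := by
        rw [Finset.sum_add_distrib, Finset.sum_div, Finset.sum_div]
    _ = _ := by rw [orth N hN, orth' N hN]; ring

lemma c2 (N : ℕ) (hN : 0 < N) (κ m : Fin N) :
    ∑ τ : Fin N, dftMatrix N κ τ * (((dftMatrix N m τ).im : ℝ) : ℂ) =
      (Complex.I/2) * ((if κ = m then 1 else 0) - (if κ = sig N m then 1 else 0)) := by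
  have hI : (2 * Complex.I : ℂ) ≠ 0 := by simp [Complex.I_ne_zero]
  have him : ∀ z : ℂ, ((z.im : ℝ) : ℂ) = (z - starRingEnd ℂ z) / (2 * Complex.I) := by
    intro z
    rw [eq_div_iff hI, Complex.sub_conj]
    push_cast
    ring
  have hdiv : ∀ a b : ℂ, (a - b) / (2 * Complex.I) = Complex.I/2 * (b - a) := by
    intro a b
    rw [div_eq_iff hI]
    have h2 : Complex.I ^ 2 = -1 := Complex.I_sq
    linear_combination (a - b) * h2
  calc ∑ τ : Fin N, dftMatrix N κ τ * (((dftMatrix N m τ).im : ℝ) : ℂ)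
      = ∑ τ : Fin N, ((dftMatrix N κ τ * dftMatrix N m τ) / (2 * Complex.I)
          - (dftMatrix N κ τ * starRingEnd ℂ (dftMatrix N m τ)) / (2 * Complex.I)) := by
        apply Finset.sum_congr rfl; intro τ _; rw [him]; ring
    _ = (∑ τ : Fin N, dftMatrix N κ τ * dftMatrix N m τ) / (2 * Complex.I)
          - (∑ τ : Fin N, dftMatrix N κ τ * starRingEnd ℂ (dftMatrix N m τ)) / (2 * Complex.I) := by
        rw [Finset.sum_sub_distrib, Finset.sum_div, Finset.sum_div]
    _ = _ := by rw [orth N hN, orth' N hN, div_sub_div_same, ← hdiv]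

lemma sig_spec (N : ℕ) (j : Fin N) :
    ((j:ℕ) = 0 ∧ ((sig N j):ℕ) = 0) ∨ (0 < (j:ℕ) ∧ ((sig N j):ℕ) = N - (j:ℕ)) := by
  rcases Nat.eq_zero_or_pos (j:ℕ) with h | h
  · exact Or.inl ⟨h, sig_val0 N j h⟩
  · exact Or.inr ⟨h, sig_val N j h⟩

def lowIdx (N : ℕ) (j : Fin N) : Fin N :=
  ⟨(j:ℕ) - N / 2, lt_of_le_of_lt (Nat.sub_le _ _) j.isLt⟩

lemma Qentry (N : ℕ) (Q : Matrix (Fin N) (Fin N) ℝ)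
    (hQ : ∀ x : Fin N → ℝ, Q *ᵥ x = phi N (dftMatrix N *ᵥ fun τ => (x τ : ℂ)))
    (j τ : Fin N) : Q j τ = phi N (fun m => dftMatrix N m τ) j := by
  have h1 := congrFun (hQ (Pi.single τ 1)) j
  have h2 : (fun t => (((Pi.single τ 1 : Fin N → ℝ) t : ℝ) : ℂ)) = Pi.single τ (1:ℂ) := by
    funext t
    by_cases ht : t = τ <;> simp [Pi.single_apply, ht]
  rw [h2] at h1
  simp [Matrix.mulVec_single] at h1; exact h1

lemma lam2 (N : ℕ) (v : Fin N → ℝ) (κ : Fin N) :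
    ((Lambda N * Lambda N) *ᵥ v) κ =
      (if (κ:ℕ) = 0 ∨ 2 * (κ:ℕ) = N then 1 else 1/2) * v κ := by
  rw [Lambda, Matrix.diagonal_mul_diagonal, Matrix.mulVec_diagonal]
  by_cases h : (κ:ℕ) = 0 ∨ 2 * (κ:ℕ) = N
  · simp [h]
  · rw [if_neg h, if_neg h, div_mul_div_comm, one_mul,
      Real.mul_self_sqrt (by norm_num : (0:ℝ) ≤ 2)]

lemma key (N : ℕ) (hN : 0 < N) (Q : Matrix (Fin N) (Fin N) ℝ)
    (hQ : ∀ x : Fin N → ℝ, Q *ᵥ x = phi N (dftMatrix N *ᵥ fun τ => (x τ : ℂ)))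
    (v : Fin N → ℝ) (κ : Fin N) :
    (dftMatrix N *ᵥ fun τ => (((Qᵀ *ᵥ v) τ : ℝ) : ℂ)) κ =
      phiInv N ((Lambda N * Lambda N) *ᵥ v) κ := by
  have hκlt := κ.isLt
  have step1 : (dftMatrix N *ᵥ fun τ => (((Qᵀ *ᵥ v) τ : ℝ) : ℂ)) κ =
      ∑ j : Fin N, (∑ τ : Fin N, dftMatrix N κ τ * ((Q j τ : ℝ) : ℂ)) * ((v j : ℝ) : ℂ) := by
    simp only [Matrix.mulVec, dotProduct, Matrix.transpose_apply]
    push_cast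
    simp_rw [Finset.mul_sum]
    rw [Finset.sum_comm]
    simp_rw [Finset.sum_mul, mul_assoc]
  rw [step1]
  have hA : ∀ j : Fin N, (j:ℕ) ≤ N/2 →
      ∑ τ : Fin N, dftMatrix N κ τ * ((Q j τ : ℝ) : ℂ) =
        (1/2) * ((if κ = j then 1 else 0) + (if κ = sig N j then 1 else 0)) := by
    intro j hj
    rw [← c1 N hN κ j]
    apply Finset.sum_congr rfl
    intro τ _
    rw [Qentry N Q hQ j τ]
    simp only [phi, if_pos hj]
  have hB : ∀ j : Fin N, ¬ (j:ℕ) ≤ N/2 →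
      ∑ τ : Fin N, dftMatrix N κ τ * ((Q j τ : ℝ) : ℂ) =
        (Complex.I/2) * ((if κ = lowIdx N j then 1 else 0)
          - (if κ = sig N (lowIdx N j) then 1 else 0)) := by
    intro j hj
    rw [← c2 N hN κ (lowIdx N j)]
    apply Finset.sum_congr rfl
    intro τ _
    rw [Qentry N Q hQ j τ]
    simp only [phi, if_neg hj]
    rfl
  have h2le : N / 2 < N := by omega
  by_cases h0 : (κ:ℕ) = 0 ∨ 2 * (κ:ℕ) = N
  · -- edge case
    have hκle : (κ:ℕ) ≤ N/2 := by omega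
    have claim : ∀ j : Fin N,
        (∑ τ : Fin N, dftMatrix N κ τ * ((Q j τ : ℝ) : ℂ)) * ((v j : ℝ) : ℂ) =
          (if j = κ then ((v j : ℝ) : ℂ) else 0) := by
      intro j
      have hjlt := j.isLt
      have hlow : ((lowIdx N j):ℕ) = (j:ℕ) - N/2 := rfl
      by_cases hj : (j:ℕ) ≤ N/2
      · rw [hA j hj]
        rcases sig_spec N j with ⟨s1, s2⟩ | ⟨s1, s2⟩ <;>
          split_ifs with e1 e2 e3 <;>
          first
            | (push_cast; ring1)
            | (exfalso; simp only [Fin.ext_iff] at *; omega)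
      · rw [hB j hj]
        rcases sig_spec N (lowIdx N j) with ⟨s1, s2⟩ | ⟨s1, s2⟩ <;>
          split_ifs with e1 e2 e3 <;>
          first
            | (push_cast; ring1)
            | (exfalso; simp only [Fin.ext_iff] at *; omega)
    rw [Finset.sum_congr rfl (fun j _ => claim j),
      Finset.sum_ite_eq' Finset.univ κ (fun j => ((v j : ℝ) : ℂ)),
      if_pos (Finset.mem_univ κ)]
    rw [phiInv]
    rw [dif_pos hκle, dif_pos h0]
    simp only [lam2]
    rw [if_pos h0, one_mul]
  · by_cases hκle : (κ:ℕ) ≤ N/2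
    · -- middle case
      have hmid : (κ:ℕ) + N/2 < N := by omega
      have hκpos : 0 < (κ:ℕ) := by omega
      set κ2 : Fin N := ⟨(κ:ℕ) + N/2, hmid⟩ with hκ2def
      have hκ2v : (κ2:ℕ) = (κ:ℕ) + N/2 := rfl
      have claim : ∀ j : Fin N,
          (∑ τ : Fin N, dftMatrix N κ τ * ((Q j τ : ℝ) : ℂ)) * ((v j : ℝ) : ℂ) =
            (if j = κ then ((v j : ℝ) : ℂ)/2 else 0)
              + (if j = κ2 then Complex.I * ((v j : ℝ) : ℂ)/2 else 0) := by
        intro j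
        have hjlt := j.isLt
        have hlow : ((lowIdx N j):ℕ) = (j:ℕ) - N/2 := rfl
        by_cases hj : (j:ℕ) ≤ N/2
        · rw [hA j hj]
          rcases sig_spec N j with ⟨s1, s2⟩ | ⟨s1, s2⟩ <;>
            split_ifs with e1 e2 e3 e4 <;>
            first
              | (push_cast; ring1)
              | (exfalso; simp only [Fin.ext_iff] at *; omega)
        · rw [hB j hj]
          rcases sig_spec N (lowIdx N j) with ⟨s1, s2⟩ | ⟨s1, s2⟩ <;>
            split_ifs with e1 e2 e3 e4 <;>
            first
              | (push_cast; ring1)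
              | (exfalso; simp only [Fin.ext_iff] at *; omega)
      rw [Finset.sum_congr rfl (fun j _ => claim j), Finset.sum_add_distrib,
        Finset.sum_ite_eq' Finset.univ κ (fun j => ((v j : ℝ) : ℂ)/2),
        Finset.sum_ite_eq' Finset.univ κ2 (fun j => Complex.I * ((v j : ℝ) : ℂ)/2),
        if_pos (Finset.mem_univ κ), if_pos (Finset.mem_univ κ2)]
      rw [phiInv, dif_pos hκle, dif_neg h0]
      have hmk : (⟨((Lambda N * Lambda N) *ᵥ v) κ,
          ((Lambda N * Lambda N) *ᵥ v) ⟨(κ:ℕ) + N/2, by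
            have hlt := κ.isLt; simp only [not_or] at h0; omega⟩⟩ : ℂ) =
          ((((Lambda N * Lambda N) *ᵥ v) κ : ℝ) : ℂ)
            + ((((Lambda N * Lambda N) *ᵥ v) κ2 : ℝ) : ℂ) * Complex.I := by
        rw [Complex.mk_eq_add_mul_I]
      rw [hmk, lam2, lam2, if_neg h0,
        if_neg (show ¬((κ2:ℕ) = 0 ∨ 2 * (κ2:ℕ) = N) by rw [hκ2v]; omega)]
      push_cast
      ring
    · -- high case
      have hκgt : N/2 < (κ:ℕ) := by omega
      have hκlt' := κ.isLt
      have ha' : N - (κ:ℕ) < N := by omega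
      have hb' : N - (κ:ℕ) + N/2 < N := by omega
      set a : Fin N := ⟨N - (κ:ℕ), ha'⟩ with hadef
      set b : Fin N := ⟨N - (κ:ℕ) + N/2, hb'⟩ with hbdef
      have hav : (a:ℕ) = N - (κ:ℕ) := rfl
      have hbv : (b:ℕ) = N - (κ:ℕ) + N/2 := rfl
      have claim : ∀ j : Fin N,
          (∑ τ : Fin N, dftMatrix N κ τ * ((Q j τ : ℝ) : ℂ)) * ((v j : ℝ) : ℂ) =
            (if j = a then ((v j : ℝ) : ℂ)/2 else 0)
              + (if j = b then -(Complex.I * ((v j : ℝ) : ℂ))/2 else 0) := by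
        intro j
        have hjlt := j.isLt
        have hlow : ((lowIdx N j):ℕ) = (j:ℕ) - N/2 := rfl
        by_cases hj : (j:ℕ) ≤ N/2
        · rw [hA j hj]
          rcases sig_spec N j with ⟨s1, s2⟩ | ⟨s1, s2⟩ <;>
            split_ifs with e1 e2 e3 e4 <;>
            first
              | (push_cast; ring1)
              | (exfalso; simp only [Fin.ext_iff] at *; omega)
        · rw [hB j hj]
          rcases sig_spec N (lowIdx N j) with ⟨s1, s2⟩ | ⟨s1, s2⟩ <;>
            split_ifs with e1 e2 e3 e4 <;>
            first
              | (push_cast; ring1)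
              | (exfalso; simp only [Fin.ext_iff] at *; omega)
      rw [Finset.sum_congr rfl (fun j _ => claim j), Finset.sum_add_distrib,
        Finset.sum_ite_eq' Finset.univ a (fun j => ((v j : ℝ) : ℂ)/2),
        Finset.sum_ite_eq' Finset.univ b (fun j => -(Complex.I * ((v j : ℝ) : ℂ))/2),
        if_pos (Finset.mem_univ a), if_pos (Finset.mem_univ b)]
      rw [phiInv, dif_neg hκle]
      have hmk : (⟨((Lambda N * Lambda N) *ᵥ v) ⟨N - (κ:ℕ), by have hlt := κ.isLt; omega⟩,
          -(((Lambda N * Lambda N) *ᵥ v) ⟨N - (κ:ℕ) + N/2, by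
            have hlt := κ.isLt; simp only [not_le] at hκle; omega⟩)⟩ : ℂ) =
          ((((Lambda N * Lambda N) *ᵥ v) a : ℝ) : ℂ)
            - ((((Lambda N * Lambda N) *ᵥ v) b : ℝ) : ℂ) * Complex.I := by
        rw [Complex.mk_eq_add_mul_I]
        push_cast
        ring
      rw [hmk, lam2, lam2,
        if_neg (show ¬((a:ℕ) = 0 ∨ 2 * (a:ℕ) = N) by rw [hav]; omega),
        if_neg (show ¬((b:ℕ) = 0 ∨ 2 * (b:ℕ) = N) by rw [hbv]; omega)]
      push_cast
      ring

/-- score matching equivalence: if `s̃ : ℂ^N → ℂ^N` satisfies the mirror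
symmetry `s̃(z)_κ = conj(s̃(z)_{N−κ})`, and `s'(x) := U* s̃(Ux)`, then `s'` is real-valued
and, for all `x ∈ ℝ^N` and `h ∈ ℝ^N`,
`‖s'(x) − Qᵀ h‖² = ‖s̃(Ux) − φ⁻¹[Λ² h]‖²`: the frequency-domain squared score-matching
loss against `Λ²`-scaled targets equals the time-domain squared loss. -/
theorem score_matching_equivalence (N : ℕ) (hN : 0 < N)
    (Q : Matrix (Fin N) (Fin N) ℝ)
    (hQ : ∀ x : Fin N → ℝ, Q *ᵥ x = phi N (dftMatrix N *ᵥ fun τ => (x τ : ℂ)))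
    (stilde : (Fin N → ℂ) → (Fin N → ℂ))
    (hsym : ∀ z : Fin N → ℂ, ∀ κ : Fin N,
      stilde z κ = starRingEnd ℂ (stilde z ⟨(N - (κ : ℕ)) % N, Nat.mod_lt _ κ.pos⟩)) :
    (∀ x : Fin N → ℝ, ∀ κ : Fin N,
      (((dftMatrix N)ᴴ *ᵥ stilde (dftMatrix N *ᵥ fun τ => (x τ : ℂ))) κ).im = 0) ∧
    (∀ x h : Fin N → ℝ,
      ∑ κ : Fin N,
        ‖((dftMatrix N)ᴴ *ᵥ stilde (dftMatrix N *ᵥ fun τ => (x τ : ℂ))) κ -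
          ((Qᵀ *ᵥ h) κ : ℂ)‖ ^ 2 =
      ∑ κ : Fin N,
        ‖stilde (dftMatrix N *ᵥ fun τ => (x τ : ℂ)) κ -
          phiInv N ((Lambda N * Lambda N) *ᵥ h) κ‖ ^ 2) := by
  have hU1 : dftMatrix N * (dftMatrix N)ᴴ = 1 := dft_mul_conjT N hN
  have hU2 : (dftMatrix N)ᴴ * dftMatrix N = 1 := mul_eq_one_comm.mp hU1
  constructor
  · intro x κ
    exact reality hN (stilde (dftMatrix N *ᵥ fun τ => ((x τ : ℝ) : ℂ)))
      (fun κ' => hsym _ κ') κ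
  · intro x h
    set w : Fin N → ℂ := stilde (dftMatrix N *ᵥ fun τ => ((x τ : ℝ) : ℂ)) with hw
    set ψ : Fin N → ℂ := phiInv N ((Lambda N * Lambda N) *ᵥ h) with hψ
    have hkey : (fun τ => (((Qᵀ *ᵥ h) τ : ℝ) : ℂ)) = (dftMatrix N)ᴴ *ᵥ ψ := by
      have h1 : dftMatrix N *ᵥ (fun τ => (((Qᵀ *ᵥ h) τ : ℝ) : ℂ)) = ψ :=
        funext (key N hN Q hQ h)
      rw [← h1, Matrix.mulVec_mulVec, hU2, Matrix.one_mulVec]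
    have hpt : ∀ κ : Fin N, ((dftMatrix N)ᴴ *ᵥ w) κ - (((Qᵀ *ᵥ h) κ : ℝ) : ℂ) =
        ((dftMatrix N)ᴴ *ᵥ (w - ψ)) κ := by
      intro κ
      rw [Matrix.mulVec_sub]
      have := congrFun hkey κ
      simp only [Pi.sub_apply]
      rw [this]
    calc ∑ κ : Fin N, ‖((dftMatrix N)ᴴ *ᵥ w) κ - (((Qᵀ *ᵥ h) κ : ℝ) : ℂ)‖ ^ 2
        = ∑ κ : Fin N, ‖((dftMatrix N)ᴴ *ᵥ (w - ψ)) κ‖ ^ 2 := by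
          exact Finset.sum_congr rfl (fun κ _ => by rw [hpt κ])
      _ = ∑ κ : Fin N, ‖(w - ψ) κ‖ ^ 2 := by
          apply norm_pres
          rw [Matrix.conjTranspose_conjTranspose]
          exact hU1
      _ = ∑ κ : Fin N, ‖w κ - ψ κ‖ ^ 2 := by
          exact Finset.sum_congr rfl (fun κ _ => by rw [Pi.sub_apply])
end
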